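/- Let A be a partial nonnegative symmetric matrix with index set E such that exactly one diagonal index (1,1) ∈ E with A₁₁ > 0 and no other diagonal indices are in E. Then A is CP-completable. -/

import Mathlib

def IsCP {n : ℕ} (C : Matrix (Fin n) (Fin n) ℝ) : Prop :=
  ∃ (m : ℕ) (B : Matrix (Fin n) (Fin m) ℝ), (∀ i j, 0 ≤ B i j) ∧ C = B * B.transpose

lemma isCP_zero {n : ℕ} : IsCP (0 : Matrix (Fin n) (Fin n) ℝ) :=
  ⟨0, 0, fun _ _ => le_refl 0, by ext i j; simp [Matrix.mul_apply]⟩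

lemma isCP_add {n : ℕ} {C D : Matrix (Fin n) (Fin n) ℝ} (hC : IsCP C) (hD : IsCP D) :
    IsCP (C + D) := by
  obtain ⟨m₁, B₁, hB₁, rfl⟩ := hC
  obtain ⟨m₂, B₂, hB₂, rfl⟩ := hD
  refine ⟨m₁ + m₂, fun i => Fin.addCases (B₁ i) (B₂ i), ?_, ?_⟩
  · intro i j
    refine Fin.addCases (fun k => ?_) (fun k => ?_) j
    · simpa using hB₁ i k
    · simpa using hB₂ i k
  · ext i j
    simp [Matrix.mul_apply, Fin.sum_univ_add, Matrix.add_apply, Matrix.transpose_apply]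
    erw [Matrix.mul_apply]; simp [Fin.sum_univ_add, Matrix.transpose]

lemma isCP_vecMulVec {n : ℕ} (v : Fin n → ℝ) (hv : ∀ i, 0 ≤ v i) :
    IsCP (Matrix.vecMulVec v v) :=
  ⟨1, fun i _ => v i, fun i _ => hv i,
    by ext i j; simp [Matrix.mul_apply, Matrix.vecMulVec_apply, Matrix.transpose_apply]
       erw [Matrix.mul_apply]; simp [Matrix.transpose]⟩

lemma isCP_sum {n : ℕ} {ι : Type*} (s : Finset ι) (f : ι → Matrix (Fin n) (Fin n) ℝ)
    (h : ∀ p ∈ s, IsCP (f p)) : IsCP (∑ p ∈ s, f p) :=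
  Finset.sum_induction f IsCP (fun _ _ => isCP_add) isCP_zero h

/-- The column vector associated to an index pair `p`. -/
noncomputable def wcol {n : ℕ} (A : Fin (n+1) × Fin (n+1) → ℝ) (s t : ℝ)
    (p : Fin (n+1) × Fin (n+1)) (x : Fin (n+1)) : ℝ :=
  if p = 0 then (if x = 0 then t else 0)
  else if p.1 = 0 then (if x = 0 then s else if x = p.2 then A p / s else 0)
  else if x = p.1 ∨ x = p.2 then Real.sqrt (A p) else 0

/-- If a partial nonnegative symmetric matrix has exactly one given diagonal
entry, which is positive, then it is CP-completable. -/
theorem cp_completable_one_diagonal {n : ℕ} (E : Finset (Fin (n+1) × Fin (n+1)))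
    (A : Fin (n+1) × Fin (n+1) → ℝ)
    (hord : ∀ p ∈ E, p.1 ≤ p.2)
    (h00 : ((0, 0) : Fin (n+1) × Fin (n+1)) ∈ E)
    (hdiag : ∀ p ∈ E, p.1 = p.2 → p = (0, 0))
    (hA : ∀ p ∈ E, 0 ≤ A p)
    (hpos : 0 < A (0, 0)) :
    ∃ C : Matrix (Fin (n+1)) (Fin (n+1)) ℝ,
      IsCP C ∧ ∀ p ∈ E, C p.1 p.2 = A p := by
  have h00' : ((0 : Fin (n+1) × Fin (n+1))) ∈ E := h00
  have hdiag' : ∀ p ∈ E, p.1 = p.2 → p = 0 := hdiag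
  set a : ℝ := A (0, 0) with ha
  have hcard : (0:ℝ) < 2 * ((E.card : ℝ) + 1) := by positivity
  set σ : ℝ := a / (2 * ((E.card : ℝ) + 1)) with hσ
  have hσpos : 0 < σ := div_pos hpos hcard
  set s : ℝ := Real.sqrt σ with hs
  have hspos : 0 < s := Real.sqrt_pos.mpr hσpos
  have hss : s * s = σ := Real.mul_self_sqrt hσpos.le
  set k : ℕ := (E.filter (fun p => p.1 = 0)).card with hk
  have hkle : (k : ℝ) ≤ (E.card : ℝ) := by
    exact_mod_cast Finset.card_filter_le E (fun p => p.1 = 0)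
  have hkσ : (k : ℝ) * σ ≤ a / 2 := by
    have h1 : (k : ℝ) * σ ≤ ((E.card : ℝ) + 1) * σ := by nlinarith
    have h2 : ((E.card : ℝ) + 1) * σ = a / 2 := by
      rw [hσ]; field_simp
    linarith
  have hrem : 0 ≤ a + σ - (k : ℝ) * σ := by linarith
  set t : ℝ := Real.sqrt (a + σ - (k : ℝ) * σ) with htdef
  have htt : t * t = a + σ - (k : ℝ) * σ := Real.mul_self_sqrt hrem
  have ht0 : 0 ≤ t := Real.sqrt_nonneg _
  -- basic facts about indices
  have hne2 : ∀ p ∈ E, p.1 ≠ 0 → p.2 ≠ 0 := by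
    intro p hp h1 h2
    exact h1 (Fin.le_zero_iff.mp (h2 ▸ hord p hp))
  have hlt : ∀ p ∈ E, p.1 ≠ 0 → p.1 ≠ p.2 := by
    intro p hp h1 h2
    have := hdiag' p hp h2
    rw [this] at h1
    exact h1 rfl
  set w := wcol A s t with hw
  refine ⟨∑ p ∈ E, Matrix.vecMulVec (w p) (w p), ?_, ?_⟩
  · refine isCP_sum E _ (fun p hp => isCP_vecMulVec _ ?_)
    intro x
    rw [hw, wcol]
    split_ifs with h1 h2 h3 h4 h5
    · exact ht0
    · exact le_refl 0
    · exact hspos.le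
    · exact div_nonneg (hA p hp) hspos.le
    · exact le_refl 0
    · exact Real.sqrt_nonneg _
    · exact le_refl 0
  · intro q hq
    have hsum : (∑ p ∈ E, Matrix.vecMulVec (w p) (w p)) q.1 q.2
        = ∑ p ∈ E, w p q.1 * w p q.2 := by
      rw [Matrix.sum_apply]
      exact Finset.sum_congr rfl (fun p _ => by rw [Matrix.vecMulVec_apply])
    rw [hsum]
    by_cases hq00 : q = 0
    · -- diagonal entry
      subst hq00
      show (∑ p ∈ E, w p 0 * w p 0) = A (0, 0)
      have hterm : ∀ p ∈ E, w p (0:Fin (n+1)) * w p (0:Fin (n+1))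
          = (if p = 0 then t * t - s * s else 0) + (if p.1 = 0 then s * s else 0) := by
        intro p hp
        by_cases h1 : p = 0
        · subst h1
          simp [hw, wcol]
        · by_cases h2 : p.1 = 0
          · simp [hw, wcol, h1, h2]
          · have h3 : (0 : Fin (n+1)) ≠ p.1 := fun h => h2 h.symm
            have h4 : (0 : Fin (n+1)) ≠ p.2 := fun h => hne2 p hp h2 h.symm
            simp [hw, wcol, h1, h2, h3, h4]
      rw [Finset.sum_congr rfl hterm, Finset.sum_add_distrib]
      have e1 : (∑ p ∈ E, if p = 0 then t * t - s * s else 0) = t * t - s * s := by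
        rw [Finset.sum_ite_eq' E (0 : Fin (n+1) × Fin (n+1)) (fun _ => t * t - s * s)]
        simp [h00']
      have e2 : (∑ p ∈ E, if p.1 = 0 then s * s else 0) = (k : ℝ) * (s * s) := by
        rw [← Finset.sum_filter, Finset.sum_const, hk, nsmul_eq_mul]
      rw [e1, e2, htt, hss, ← ha]
      ring
    · by_cases hq1 : q.1 = 0
      · -- row-zero off-diagonal entry
        have hq2 : q.2 ≠ 0 := by
          intro h
          exact hq00 (Prod.ext hq1 h)
        rw [Finset.sum_eq_single_of_mem q hq ?_]
        · have h5 : w q q.1 * w q q.2 = s * (A q / s) := by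
            simp [hw, wcol, hq00, hq1, hq2]
          rw [h5, mul_comm, div_mul_cancel₀ _ hspos.ne']
        · intro p hp hne
          by_cases h1 : p = 0
          · subst h1
            simp [hw, wcol, hq2]
          · by_cases h2 : p.1 = 0
            · have h3 : q.2 ≠ p.2 := by
                intro h
                exact hne (Prod.ext (h2.trans hq1.symm) h.symm)
              simp [hw, wcol, h1, h2, hq1, hq2, h3]
            · have h3 : q.1 ≠ p.1 := by rw [hq1]; exact fun h => h2 h.symm
              have h4 : q.1 ≠ p.2 := by rw [hq1]; exact fun h => hne2 p hp h2 h.symm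
              simp [hw, wcol, h1, h2, h3, h4]
      · -- interior off-diagonal entry
        have hq12 : q.1 ≠ q.2 := hlt q hq hq1
        have hq2 : q.2 ≠ 0 := hne2 q hq hq1
        rw [Finset.sum_eq_single_of_mem q hq ?_]
        · have h5 : w q q.1 * w q q.2 = Real.sqrt (A q) * Real.sqrt (A q) := by
            simp [hw, wcol, hq00, hq1]
          rw [h5]
          exact Real.mul_self_sqrt (hA q hq)
        · intro p hp hne
          by_cases h1 : p = 0
          · subst h1
            simp [hw, wcol, hq1]
          · by_cases h2 : p.1 = 0
            · by_cases hc : q.1 = p.2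
              · have : q.2 ≠ p.2 := fun h => hq12 (hc.trans h.symm)
                simp [hw, wcol, h1, h2, hq1, hq2, this]
              · simp [hw, wcol, h1, h2, hq1, hc]
            · have hp12 : p.1 ≠ p.2 := hlt p hp h2
              by_cases e1 : q.1 = p.1
              · by_cases e2 : q.2 = p.2
                · exact absurd (Prod.ext e1 e2).symm hne
                · have e3 : q.2 ≠ p.1 := fun h => hq12 (e1.trans h.symm)
                  simp [hw, wcol, h1, h2, e2, e3]
              · by_cases e3 : q.1 = p.2
                · have e4 : q.2 ≠ p.1 := by
                    intro h
                    have := hord q hq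
                    have := hord p hp
                    apply hp12
                    apply le_antisymm
                    · exact hord p hp
                    · rw [← h, ← e3]; exact hord q hq
                  have e5 : q.2 ≠ p.2 := fun h => hq12 (e3.trans h.symm)
                  simp [hw, wcol, h1, h2, e4, e5]
                · simp [hw, wcol, h1, h2, e1, e3]
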